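/- arXiv:1210.3684 — 2 statements merged into one kernel-verified Lean document; each statement's English description precedes it below -/
import Mathlib

section
/- The 1/(m−1) performance bound for the Greedy algorithm is tight: for the n×n instance with q_{11} = 1, q_{1j} = q_{j1} = −n for j ≥ 2, q_{jj} = 1 for j ≥ 2, all other entries 0, and c = d = 0, the optimal objective value is m − 1 (attained by x = y = (0,1,...,1)ᵀ), while the Greedy algorithm (which fixes x_1 = 1 first) produces a solution of objective value 1. -/
noncomputable def bqpObj {m n : ℕ} (Q : Fin m → Fin n → ℝ) (c : Fin m → ℝ) (d : Fin n → ℝ)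
    (x : Fin m → ℝ) (y : Fin n → ℝ) : ℝ :=
  ∑ i, ∑ j, Q i j * x i * y j + ∑ i, c i * x i + ∑ j, d j * y j

def isBinary {k : ℕ} (x : Fin k → ℝ) : Prop := ∀ i, x i = 0 ∨ x i = 1

open Classical in
noncomputable def yOpt {m n : ℕ} (Q : Fin m → Fin n → ℝ) (d : Fin n → ℝ)
    (x : Fin m → ℝ) : Fin n → ℝ :=
  fun j => if 0 < (∑ i, Q i j * x i) + d j then 1 else 0

open Classical in
noncomputable def greedyX {m n : ℕ} (Q : Fin m → Fin n → ℝ) (c : Fin m → ℝ) (d : Fin n → ℝ) :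
    ℕ → (Fin m → ℝ)
  | 0 => fun _ => 0
  | (t + 1) =>
      let s := greedyX Q c d t
      if h : t < m then
        let s1 := Function.update s ⟨t, h⟩ 1
        if bqpObj Q c d s (yOpt Q d s) < bqpObj Q c d s1 (yOpt Q d s1) then s1 else s
      else s

/-- The tight-example matrix: q₁₁ = 1, q₁ⱼ = qⱼ₁ = −n for j ≥ 2, qⱼⱼ = 1 for j ≥ 2, else 0. -/
noncomputable def tightQ (n : ℕ) : Fin n → Fin n → ℝ := fun i j =>
  if i.val = 0 ∧ j.val = 0 then 1
  else if i.val = 0 ∨ j.val = 0 then -(n : ℝ)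
  else if i = j then 1 else 0

section Helpers

variable {n : ℕ}

/-- indicator of index 0 -/
noncomputable def e0 (n : ℕ) : Fin n → ℝ := fun i => if i.val = 0 then 1 else 0

lemma tightQ_00 [NeZero n] : tightQ n 0 0 = 1 := by simp [tightQ]

lemma tightQ_0j [NeZero n] {j : Fin n} (hj : j ≠ 0) : tightQ n 0 j = -(n : ℝ) := by
  have : (j : ℕ) ≠ 0 := fun h => hj (Fin.ext (by simp [h]))
  simp [tightQ, this]

lemma tightQ_i0 [NeZero n] {i : Fin n} (hi : i ≠ 0) : tightQ n i 0 = -(n : ℝ) := by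
  have : (i : ℕ) ≠ 0 := fun h => hi (Fin.ext (by simp [h]))
  simp [tightQ, this]

lemma tightQ_ij [NeZero n] {i j : Fin n} (hi : i ≠ 0) (hj : j ≠ 0) :
    tightQ n i j = if i = j then 1 else 0 := by
  have hi' : (i : ℕ) ≠ 0 := fun h => hi (Fin.ext (by simp [h]))
  have hj' : (j : ℕ) ≠ 0 := fun h => hj (Fin.ext (by simp [h]))
  simp [tightQ, hi', hj']

/-- The key algebraic identity for the tight-example objective. -/
lemma tight_obj [NeZero n] (x y : Fin n → ℝ) :
    bqpObj (tightQ n) (fun _ => 0) (fun _ => 0) x y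
      = x 0 * y 0 + ∑ i ∈ Finset.univ.erase (0 : Fin n),
          (x i * y i - n * (x 0 * y i + x i * y 0)) := by
  have hrow : ∀ i : Fin n, i ≠ 0 →
      ∑ j, tightQ n i j * x i * y j = -(n:ℝ) * (x i * y 0) + x i * y i := by
    intro i hi
    rw [← Finset.add_sum_erase _ _ (Finset.mem_univ (0 : Fin n))]
    rw [tightQ_i0 hi]
    have : ∑ j ∈ Finset.univ.erase (0 : Fin n), tightQ n i j * x i * y j
        = ∑ j ∈ Finset.univ.erase (0 : Fin n), if i = j then x i * y j else 0 := by
      refine Finset.sum_congr rfl fun j hj => ?_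
      have hj0 : j ≠ 0 := (Finset.mem_erase.mp hj).1
      rw [tightQ_ij hi hj0]
      split_ifs <;> ring
    rw [this, Finset.sum_ite_eq]
    simp [hi]
    ring
  have hrow0 : ∑ j, tightQ n 0 j * x 0 * y j
      = x 0 * y 0 + ∑ j ∈ Finset.univ.erase (0 : Fin n), -(n:ℝ) * (x 0 * y j) := by
    rw [← Finset.add_sum_erase _ _ (Finset.mem_univ (0 : Fin n))]
    rw [tightQ_00]
    congr 1
    · ring
    · refine Finset.sum_congr rfl fun j hj => ?_
      rw [tightQ_0j (Finset.mem_erase.mp hj).1]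
      ring
  have : bqpObj (tightQ n) (fun _ => 0) (fun _ => 0) x y
      = ∑ i, ∑ j, tightQ n i j * x i * y j := by simp [bqpObj]
  rw [this, ← Finset.add_sum_erase _ _ (Finset.mem_univ (0 : Fin n)), hrow0]
  rw [Finset.sum_congr rfl (fun i hi => hrow i (Finset.mem_erase.mp hi).1)]
  have hsplit : ∑ i ∈ Finset.univ.erase (0 : Fin n),
        (x i * y i - (n:ℝ) * (x 0 * y i + x i * y 0))
      = (∑ i ∈ Finset.univ.erase (0 : Fin n), -(n:ℝ) * (x 0 * y i))
        + ∑ i ∈ Finset.univ.erase (0 : Fin n), (-(n:ℝ) * (x i * y 0) + x i * y i) := by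
    rw [← Finset.sum_add_distrib]
    exact Finset.sum_congr rfl fun i _ => by ring
  rw [hsplit]
  ring

lemma yOpt_zero_of_nonpos [NeZero n] (x : Fin n → ℝ)
    (h : ∀ j, ∑ i, tightQ n i j * x i ≤ 0) :
    yOpt (tightQ n) (fun _ => 0) x = fun _ => 0 := by
  funext j
  simp [yOpt, not_lt.mpr (h j)]

lemma obj_yzero (Q : Fin n → Fin n → ℝ) (x : Fin n → ℝ) :
    bqpObj Q (fun _ => 0) (fun _ => 0) x (fun _ => 0) = 0 := by simp [bqpObj]

lemma colsum_e0 [NeZero n] (j : Fin n) :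
    ∑ i, tightQ n i j * e0 n i = tightQ n 0 j := by
  rw [Finset.sum_eq_single (0 : Fin n)]
  · simp [e0]
  · intro i _ hi
    have : (i : ℕ) ≠ 0 := fun h => hi (Fin.ext (by simp [h]))
    simp [e0, this]
  · simp

lemma yOpt_e0 (hn : 2 ≤ n) [NeZero n] :
    yOpt (tightQ n) (fun _ => 0) (e0 n) = e0 n := by
  funext j
  simp only [yOpt, add_zero, colsum_e0]
  by_cases hj : j = 0
  · subst hj; rw [tightQ_00]; norm_num [e0]
  · rw [tightQ_0j hj]
    have hj' : (j : ℕ) ≠ 0 := fun h => hj (Fin.ext (by simp [h]))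
    have : ¬ (0:ℝ) < -(n:ℝ) := by
      push_neg
      have : (0:ℝ) ≤ (n:ℝ) := by positivity
      linarith
    simp [this, e0, hj']

lemma obj_e0 [NeZero n] :
    bqpObj (tightQ n) (fun _ => 0) (fun _ => 0) (e0 n) (e0 n) = 1 := by
  rw [tight_obj]
  have h0 : e0 n 0 = 1 := by simp [e0]
  have : ∀ i ∈ Finset.univ.erase (0 : Fin n),
      e0 n i * e0 n i - (n:ℝ) * (e0 n 0 * e0 n i + e0 n i * e0 n 0) = 0 := by
    intro i hi
    have : (i : ℕ) ≠ 0 := fun h => (Finset.mem_erase.mp hi).1 (Fin.ext (by simp [h]))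
    simp [e0, this]
  rw [Finset.sum_congr rfl this]
  simp [h0]

lemma greedy_e0 (hn : 2 ≤ n) [NeZero n] :
    ∀ t, 1 ≤ t → t ≤ n → greedyX (tightQ n) (fun _ => 0) (fun _ => 0) t = e0 n := by
  intro t
  induction t with
  | zero => omega
  | succ t ih =>
    intro _ ht
    by_cases h1 : t = 0
    · subst h1
      have hlt : 0 < n := by omega
      rw [greedyX]
      simp only [hlt, dif_pos]
      have hupd : Function.update (greedyX (tightQ n) (fun _ => (0:ℝ)) (fun _ => 0) 0)
          ⟨0, hlt⟩ 1 = e0 n := by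
        funext i
        rw [greedyX]
        rw [Function.update_apply]
        have : i = (⟨0, hlt⟩ : Fin n) ↔ (i : ℕ) = 0 := Fin.ext_iff
        simp only [e0]
        split_ifs with h2 h3 h3 <;>
          first
          | rfl
          | (exact absurd (this.mp h2) h3)
          | (exact absurd (this.mpr h3) h2)
      rw [hupd]
      have hz : greedyX (tightQ n) (fun _ => (0:ℝ)) (fun _ => 0) 0 = fun _ => 0 := by
        rw [greedyX]
      rw [hz, yOpt_e0 hn, obj_e0]
      have hy0 : yOpt (tightQ n) (fun _ => (0:ℝ)) (fun _ => 0) = fun _ => 0 := by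
        apply yOpt_zero_of_nonpos
        intro j
        simp
      rw [hy0, obj_yzero]
      norm_num
    · have ht1 : 1 ≤ t := by omega
      have hlt : t < n := by omega
      have hs := ih ht1 (le_of_lt hlt)
      rw [greedyX]
      simp only [hs, hlt, dif_pos]
      set k : Fin n := ⟨t, hlt⟩ with hk
      have hk0 : k ≠ 0 := by simp [hk, Fin.ext_iff]; omega
      set s1 := Function.update (e0 n) k 1 with hs1
      have hcol : ∀ j, ∑ i, tightQ n i j * s1 i = tightQ n 0 j + tightQ n k j := by
        intro j
        have hdecomp : ∀ i, s1 i = e0 n i + (if i = k then 1 else 0) := by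
          intro i
          rw [hs1, Function.update_apply]
          have hk0' : (k : ℕ) ≠ 0 := fun h => hk0 (Fin.ext (by simp [h]))
          by_cases h : i = k
          · subst h; simp [e0, hk0']
          · simp [h]
        have : ∀ i, tightQ n i j * s1 i
            = tightQ n i j * e0 n i + (if i = k then tightQ n i j else 0) := by
          intro i
          rw [hdecomp i]
          split_ifs <;> ring
        rw [Finset.sum_congr rfl (fun i _ => this i), Finset.sum_add_distrib, colsum_e0,
          Finset.sum_ite_eq' Finset.univ k (fun i => tightQ n i j)]
        simp
      have hyz : yOpt (tightQ n) (fun _ => 0) s1 = fun _ => 0 := by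
        apply yOpt_zero_of_nonpos
        intro j
        rw [hcol j]
        by_cases hj : j = 0
        · subst hj
          rw [tightQ_00, tightQ_i0 hk0]
          have : (2:ℝ) ≤ (n:ℝ) := by exact_mod_cast hn
          linarith
        · rw [tightQ_0j hj, tightQ_ij hk0 hj]
          have : (2:ℝ) ≤ (n:ℝ) := by exact_mod_cast hn
          split_ifs <;> linarith
      rw [hyz, obj_yzero, yOpt_e0 hn, obj_e0]
      norm_num

end Helpers

/-- tightness of the 1/(m−1) bound for the Greedy algorithm.  On the tight
example (m = n, c = d = 0), the optimal value is m − 1, attained by x = y = (0,1,…,1)ᵀ,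
while the Greedy solution has objective value 1. -/
theorem greedy_bound_tight {n : ℕ} (hn : 2 ≤ n) :
    isBinary (fun i : Fin n => if i.val = 0 then 0 else 1) ∧
    bqpObj (tightQ n) (fun _ => 0) (fun _ => 0)
        (fun i : Fin n => if i.val = 0 then 0 else 1)
        (fun j : Fin n => if j.val = 0 then 0 else 1) = (n : ℝ) - 1 ∧
    (∀ x y, isBinary x → isBinary y →
      bqpObj (tightQ n) (fun _ => 0) (fun _ => 0) x y ≤ (n : ℝ) - 1) ∧
    (∀ i : Fin n, i.val = 0 → (greedyX (tightQ n) (fun _ => 0) (fun _ => 0) n) i = 1) ∧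
    bqpObj (tightQ n) (fun _ => 0) (fun _ => 0)
        (greedyX (tightQ n) (fun _ => 0) (fun _ => 0) n)
        (yOpt (tightQ n) (fun _ => 0) (greedyX (tightQ n) (fun _ => 0) (fun _ => 0) n))
      = 1 := by
  haveI : NeZero n := ⟨by omega⟩
  have hcard : (Finset.univ.erase (0 : Fin n)).card = n - 1 := by
    rw [Finset.card_erase_of_mem (Finset.mem_univ _)]
    simp
  have hcast : ((n - 1 : ℕ) : ℝ) = (n : ℝ) - 1 := by
    have : 1 ≤ n := by omega
    push_cast [this]
    ring
  have hgreedy : greedyX (tightQ n) (fun _ => 0) (fun _ => 0) n = e0 n :=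
    greedy_e0 hn n (by omega) le_rfl
  refine ⟨?_, ?_, ?_, ?_, ?_⟩
  · intro i; by_cases h : (i : ℕ) = 0 <;> simp [h]
  · rw [tight_obj]
    have : ∀ i ∈ Finset.univ.erase (0 : Fin n),
        ((fun i : Fin n => if (i:ℕ) = 0 then (0:ℝ) else 1) i *
          (fun j : Fin n => if (j:ℕ) = 0 then (0:ℝ) else 1) i -
          (n:ℝ) * ((fun i : Fin n => if (i:ℕ) = 0 then (0:ℝ) else 1) 0 *
            (fun j : Fin n => if (j:ℕ) = 0 then (0:ℝ) else 1) i +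
            (fun i : Fin n => if (i:ℕ) = 0 then (0:ℝ) else 1) i *
            (fun j : Fin n => if (j:ℕ) = 0 then (0:ℝ) else 1) 0)) = 1 := by
      intro i hi
      have : (i : ℕ) ≠ 0 := fun h => (Finset.mem_erase.mp hi).1 (Fin.ext (by simp [h]))
      simp [this]
    rw [Finset.sum_congr rfl this]
    simp [hcard, hcast]
  · intro x y hx hy
    rw [tight_obj]
    have h2n : (2:ℝ) ≤ (n:ℝ) := by exact_mod_cast hn
    rcases hx 0 with hx0 | hx0 <;> rcases hy 0 with hy0 | hy0
    · -- x0 = 0, y0 = 0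
      have hb : ∀ i ∈ Finset.univ.erase (0 : Fin n),
          x i * y i - (n:ℝ) * (x 0 * y i + x i * y 0) ≤ 1 := by
        intro i _
        rcases hx i with h | h <;> rcases hy i with h' | h' <;>
          rw [h, h', hx0, hy0] <;> nlinarith
      have hsum : ∑ i ∈ Finset.univ.erase (0 : Fin n),
          (x i * y i - (n:ℝ) * (x 0 * y i + x i * y 0)) ≤ (n:ℝ) - 1 := by
        calc ∑ i ∈ Finset.univ.erase (0 : Fin n),
              (x i * y i - (n:ℝ) * (x 0 * y i + x i * y 0))
            ≤ ∑ _i ∈ Finset.univ.erase (0 : Fin n), (1:ℝ) := Finset.sum_le_sum hb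
          _ = (n:ℝ) - 1 := by
              rw [Finset.sum_const, hcard, nsmul_eq_mul, hcast]; ring
      have hxy : x 0 * y 0 = 0 := by rw [hx0]; ring
      linarith
    · have hb : ∀ i ∈ Finset.univ.erase (0 : Fin n),
          x i * y i - (n:ℝ) * (x 0 * y i + x i * y 0) ≤ 1 := by
        intro i _
        rcases hx i with h | h <;> rcases hy i with h' | h' <;>
          rw [h, h', hx0, hy0] <;> nlinarith
      have hsum : ∑ i ∈ Finset.univ.erase (0 : Fin n),
          (x i * y i - (n:ℝ) * (x 0 * y i + x i * y 0)) ≤ (n:ℝ) - 1 := by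
        calc ∑ i ∈ Finset.univ.erase (0 : Fin n),
              (x i * y i - (n:ℝ) * (x 0 * y i + x i * y 0))
            ≤ ∑ _i ∈ Finset.univ.erase (0 : Fin n), (1:ℝ) := Finset.sum_le_sum hb
          _ = (n:ℝ) - 1 := by
              rw [Finset.sum_const, hcard, nsmul_eq_mul, hcast]; ring
      have hxy : x 0 * y 0 = 0 := by rw [hx0]; ring
      linarith
    · have hb : ∀ i ∈ Finset.univ.erase (0 : Fin n),
          x i * y i - (n:ℝ) * (x 0 * y i + x i * y 0) ≤ 1 := by
        intro i _
        rcases hx i with h | h <;> rcases hy i with h' | h' <;>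
          rw [h, h', hx0, hy0] <;> nlinarith
      have hsum : ∑ i ∈ Finset.univ.erase (0 : Fin n),
          (x i * y i - (n:ℝ) * (x 0 * y i + x i * y 0)) ≤ (n:ℝ) - 1 := by
        calc ∑ i ∈ Finset.univ.erase (0 : Fin n),
              (x i * y i - (n:ℝ) * (x 0 * y i + x i * y 0))
            ≤ ∑ _i ∈ Finset.univ.erase (0 : Fin n), (1:ℝ) := Finset.sum_le_sum hb
          _ = (n:ℝ) - 1 := by
              rw [Finset.sum_const, hcard, nsmul_eq_mul, hcast]; ring
      have hxy : x 0 * y 0 = 0 := by rw [hy0]; ring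
      linarith
    · -- x0 = y0 = 1
      have hb : ∀ i ∈ Finset.univ.erase (0 : Fin n),
          x i * y i - (n:ℝ) * (x 0 * y i + x i * y 0) ≤ 0 := by
        intro i _
        rcases hx i with h | h <;> rcases hy i with h' | h' <;>
          rw [h, h', hx0, hy0] <;> nlinarith
      have hsum : ∑ i ∈ Finset.univ.erase (0 : Fin n),
          (x i * y i - (n:ℝ) * (x 0 * y i + x i * y 0)) ≤ 0 := by
        calc ∑ i ∈ Finset.univ.erase (0 : Fin n),
              (x i * y i - (n:ℝ) * (x 0 * y i + x i * y 0))
            ≤ ∑ _i ∈ Finset.univ.erase (0 : Fin n), (0:ℝ) := Finset.sum_le_sum hb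
          _ = 0 := by simp
      have hxy : x 0 * y 0 = 1 := by rw [hx0, hy0]; ring
      linarith
  · intro i hi
    rw [hgreedy]
    simp [e0, hi]
  · rw [hgreedy, yOpt_e0 hn, obj_e0]
end

section
/- For the tight-example matrix Q (q_{11}=1; q_{1j}=q_{j1}=−n for j≥2; q_{jj}=1 for j≥2; else 0) with c = d = 0: any feasible solution with x_1 = 1 has objective value at most 1, and the solution x = y = (0,1,...,1)ᵀ has objective value n − 1, which is optimal. -/
open Finset

/-- Objective with c = d = 0: f(x,y) = ∑ᵢⱼ qᵢⱼ xᵢ yⱼ. -/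
noncomputable def quadObj {n : ℕ} (Q : Fin n → Fin n → ℝ)
    (x y : Fin n → ℝ) : ℝ :=
  ∑ i, ∑ j, Q i j * x i * y j

lemma binary_nonneg {n : ℕ} {x : Fin n → ℝ} (hx : isBinary x) (i : Fin n) : 0 ≤ x i := by
  rcases hx i with h | h <;> simp [h]

lemma binary_le_one {n : ℕ} {x : Fin n → ℝ} (hx : isBinary x) (i : Fin n) : x i ≤ 1 := by
  rcases hx i with h | h <;> simp [h]

lemma decomp {n : ℕ} [NeZero n] (x y : Fin n → ℝ) :
    quadObj (tightQ n) x y =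
      x 0 * y 0 - (n:ℝ) * x 0 * (∑ j ∈ univ.erase 0, y j)
        - (n:ℝ) * y 0 * (∑ i ∈ univ.erase 0, x i)
        + ∑ i ∈ univ.erase 0, x i * y i := by
  unfold quadObj
  rw [← Finset.add_sum_erase _ _ (mem_univ (0:Fin n))]
  have h0 : ∑ j, tightQ n 0 j * x 0 * y j
      = x 0 * y 0 - (n:ℝ) * x 0 * ∑ j ∈ univ.erase 0, y j := by
    rw [← Finset.add_sum_erase _ _ (mem_univ (0:Fin n))]
    have hc : ∀ j ∈ univ.erase (0:Fin n), tightQ n 0 j * x 0 * y j = -(n:ℝ) * (x 0 * y j) := by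
      intro j hj
      have hj0 : j.val ≠ 0 := by
        have := (mem_erase.mp hj).1
        exact fun h => this (Fin.ext (h.trans (Fin.val_zero n).symm))
      simp [tightQ, hj0]
      ring
    rw [Finset.sum_congr rfl hc, ← Finset.mul_sum, ← Finset.mul_sum]
    simp [tightQ]
    ring
  have h1 : ∀ i ∈ univ.erase (0:Fin n), ∑ j, tightQ n i j * x i * y j
      = -((n:ℝ) * y 0 * x i) + x i * y i := by
    intro i hi
    have hi0 : i.val ≠ 0 := by
      have := (mem_erase.mp hi).1
      exact fun h => this (Fin.ext (h.trans (Fin.val_zero n).symm))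
    rw [← Finset.add_sum_erase _ _ (mem_univ (0:Fin n))]
    have hc : ∀ j ∈ univ.erase (0:Fin n), tightQ n i j * x i * y j
        = (if i = j then 1 else 0) * x i * y j := by
      intro j hj
      have hj0 : j.val ≠ 0 := by
        have := (mem_erase.mp hj).1
        exact fun h => this (Fin.ext (h.trans (Fin.val_zero n).symm))
      simp [tightQ, hi0, hj0]
    rw [Finset.sum_congr rfl hc]
    have hsum : ∑ j ∈ univ.erase (0:Fin n), (if i = j then 1 else 0) * x i * y j
        = x i * y i := by
      rw [Finset.sum_eq_single i]
      · simp
      · intro b _ hbne; simp [Ne.symm hbne]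
      · intro h; exact absurd hi h
    rw [hsum]
    simp [tightQ, hi0]
    ring
  rw [h0, Finset.sum_congr rfl h1, Finset.sum_add_distrib, Finset.sum_neg_distrib,
    ← Finset.mul_sum]
  ring

lemma card_erase_zero {n : ℕ} [NeZero n] :
    ((univ : Finset (Fin n)).erase 0).card = n - 1 := by
  rw [Finset.card_erase_of_mem (mem_univ _), Finset.card_univ, Fintype.card_fin]

/-- in the tight example (n ≥ 3), any feasible solution with x₁ = 1 has
objective at most 1, and x = y = (0,1,…,1)ᵀ attains the optimal value n − 1. -/
theorem tight_example_properties {n : ℕ} (hn : 3 ≤ n) :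
    (∀ (x y : Fin n → ℝ), isBinary x → isBinary y → (∀ i : Fin n, i.val = 0 → x i = 1) →
      quadObj (tightQ n) x y ≤ 1) ∧
    quadObj (tightQ n) (fun i => if i.val = 0 then 0 else 1)
        (fun j => if j.val = 0 then 0 else 1) = (n : ℝ) - 1 ∧
    (∀ (x y : Fin n → ℝ), isBinary x → isBinary y →
      quadObj (tightQ n) x y ≤ (n : ℝ) - 1) := by
  haveI : NeZero n := ⟨by omega⟩
  have hn3 : (3:ℝ) ≤ (n:ℝ) := by exact_mod_cast hn
  -- Part 1
  have part1 : ∀ (x y : Fin n → ℝ), isBinary x → isBinary y →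
      (∀ i : Fin n, i.val = 0 → x i = 1) → quadObj (tightQ n) x y ≤ 1 := by
    intro x y hx hy hx0
    have hx0' : x 0 = 1 := hx0 0 (Fin.val_zero n)
    rw [decomp, hx0']
    set Y := ∑ j ∈ univ.erase (0:Fin n), y j with hY
    set X := ∑ i ∈ univ.erase (0:Fin n), x i with hX
    have hYnn : 0 ≤ Y := Finset.sum_nonneg fun j _ => binary_nonneg hy j
    have hXnn : 0 ≤ X := Finset.sum_nonneg fun i _ => binary_nonneg hx i
    have hSle : ∑ i ∈ univ.erase (0:Fin n), x i * y i ≤ Y := by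
      apply Finset.sum_le_sum
      intro i _
      rcases hx i with h | h
      · simp [h]; exact binary_nonneg hy i
      · simp [h]
    have hy0 : 0 ≤ y 0 := binary_nonneg hy 0
    have hy1 : y 0 ≤ 1 := binary_le_one hy 0
    nlinarith [mul_nonneg hy0 hXnn]
  refine ⟨part1, ?_, ?_⟩
  · -- Part 2
    have hsum : ∀ (f : Fin n → ℝ), (∀ i ∈ univ.erase (0:Fin n), f i = 1) →
        ∑ i ∈ univ.erase (0:Fin n), f i = (n:ℝ) - 1 := by
      intro f hf
      rw [Finset.sum_congr rfl hf, Finset.sum_const, card_erase_zero, nsmul_eq_mul, mul_one]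
      have : (1:ℕ) ≤ n := by omega
      push_cast [Nat.cast_sub this]
      ring
    have h1 : ∑ i ∈ univ.erase (0:Fin n),
        ((if i.val = 0 then (0:ℝ) else 1) * (if i.val = 0 then (0:ℝ) else 1)) = (n:ℝ) - 1 := by
      apply hsum
      intro i hi
      have hi0 : i.val ≠ 0 := by
        have := (mem_erase.mp hi).1
        exact fun h => this (Fin.ext (h.trans (Fin.val_zero n).symm))
      simp [hi0]
    rw [decomp, h1]
    norm_num
  · -- Part 3
    intro x y hx hy
    have hSle : ∑ i ∈ univ.erase (0:Fin n), x i * y i ≤ (n:ℝ) - 1 := by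
      have hterm : ∀ i ∈ univ.erase (0:Fin n), x i * y i ≤ (1:ℝ) := by
        intro i _
        have h := mul_le_mul (binary_le_one hx i) (binary_le_one hy i)
          (binary_nonneg hy i) zero_le_one
        linarith
      have h1 := Finset.sum_le_sum hterm
      have h2 : ∑ _i ∈ univ.erase (0:Fin n), (1:ℝ) = (n:ℝ) - 1 := by
        rw [Finset.sum_const, card_erase_zero, nsmul_eq_mul, mul_one]
        have h3 : (1:ℕ) ≤ n := by omega
        push_cast [Nat.cast_sub h3]
        ring
      linarith
    rcases hx 0 with hx0 | hx0
    · rw [decomp, hx0]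
      have hXnn : 0 ≤ ∑ i ∈ univ.erase (0:Fin n), x i :=
        Finset.sum_nonneg fun i _ => binary_nonneg hx i
      have hy0 : 0 ≤ y 0 := binary_nonneg hy 0
      nlinarith [mul_nonneg hy0 hXnn]
    · have := part1 x y hx hy (fun i hi => by
        have : i = 0 := Fin.ext hi
        rw [this]; exact hx0)
      linarith
end
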